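/- arXiv:1311.3249 — 2 statements merged into one kernel-verified Lean document; each statement's English description precedes it below -/
import Mathlib

section
/- Let K be a finite extension of Q_p and χ_1, χ_2 smooth characters of O_K^× of levels n_1 and n_2 respectively with n_1 ≥ n_2 + 1. Let u = [[1, x],[0,1]] be an element of the upper triangular unipotent subgroup of GL_2(K) with x ∉ O_K. Then u does not intertwine the character χ = χ_1 ⊗ χ_2 of the diagonal torus T^0 = O_K^× × O_K^×; concretely, setting n = n_1 − v(x), there exist a, d ∈ O_K^× and c ∈ O_K with χ_1(a + xϖ^n c)χ_2(d − xϖ^n c) ≠ χ_1(a)χ_2(d). -/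
/-!
STATEMENT 2: Let `K` be a finite extension of `ℚ_p` with ring of integers `O`
(formalized as a discrete valuation ring with uniformizer `ϖ`) and `χ₁, χ₂` smooth
characters of `Oˣ` of levels `n₁`, `n₂` with `n₁ ≥ n₂ + 1`.  Let
`u = [[1,x],[0,1]] ∈ GL₂(K)` with `x ∉ O` and set `n = n₁ − v(x)`; the element
`y = x·ϖ^n` then lies in `O` and has valuation exactly `n₁` (this is how `x` enters
the computation, and how we encode it).  Then `u` does not intertwine
`χ = χ₁ ⊗ χ₂`: there exist `a, d ∈ Oˣ` and `c ∈ O` with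
`χ₁(a + xϖ^n c)·χ₂(d − xϖ^n c) ≠ χ₁(a)·χ₂(d)`.
-/
theorem stmt_2
    (O : Type) [CommRing O] [IsDomain O] [IsDiscreteValuationRing O]
    (ϖ : O) (hϖ : Irreducible ϖ)
    (L : Type) [Field L]
    (χ₁ χ₂ : Oˣ →* Lˣ) (n₁ n₂ : ℕ)
    -- χ₁ has level n₁ :
    (hχ₁ : ∀ u : Oˣ, (u : O) - 1 ∈ Ideal.span ({ϖ ^ (n₁ + 1)} : Set O) → χ₁ u = 1)
    (hχ₁' : ∀ m : ℕ, m < n₁ →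
      ¬ ∀ u : Oˣ, (u : O) - 1 ∈ Ideal.span ({ϖ ^ (m + 1)} : Set O) → χ₁ u = 1)
    -- χ₂ has level n₂ :
    (hχ₂ : ∀ u : Oˣ, (u : O) - 1 ∈ Ideal.span ({ϖ ^ (n₂ + 1)} : Set O) → χ₂ u = 1)
    (hχ₂' : ∀ m : ℕ, m < n₂ →
      ¬ ∀ u : Oˣ, (u : O) - 1 ∈ Ideal.span ({ϖ ^ (m + 1)} : Set O) → χ₂ u = 1)
    (hn : n₂ + 1 ≤ n₁)
    -- y = x·ϖ^n where x ∉ O and n = n₁ − v(x), so v(y) = n₁ exactly :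
    (y : O) (hy : y ∈ Ideal.span ({ϖ ^ n₁} : Set O))
    (hy' : y ∉ Ideal.span ({ϖ ^ (n₁ + 1)} : Set O)) :
    ∃ (a d : Oˣ) (c : O) (h₁ : IsUnit ((a : O) + y * c)) (h₂ : IsUnit ((d : O) - y * c)),
      χ₁ h₁.unit * χ₂ h₂.unit ≠ χ₁ a * χ₂ d := by
  have hn₁ : 1 ≤ n₁ := le_trans (Nat.le_add_left 1 n₂) hn
  have h := hχ₁' (n₁ - 1) (by omega)
  push_neg at h
  obtain ⟨u, hu1, hu2⟩ := h
  rw [Nat.sub_add_cancel hn₁] at hu1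
  rw [Ideal.mem_span_singleton] at hu1 hy hy'
  obtain ⟨t, ht⟩ := hu1
  obtain ⟨s, hs⟩ := hy
  have hsu : IsUnit s := by
    by_contra hns
    apply hy'
    have : ϖ ∣ s := by
      have := (IsLocalRing.mem_maximalIdeal s).mpr hns
      rwa [hϖ.maximalIdeal_eq, Ideal.mem_span_singleton] at this
    obtain ⟨r, hr⟩ := this
    exact ⟨r, by rw [hs, hr, pow_succ]; ring⟩
  set c : O := (↑hsu.unit⁻¹ : O) * t with hc
  have hyc : y * c = (u : O) - 1 := by
    have hs1 : s * (↑hsu.unit⁻¹ : O) = 1 := by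
      have h2 : (↑hsu.unit : O) * ↑hsu.unit⁻¹ = 1 := hsu.unit.mul_inv
      rwa [hsu.unit_spec] at h2
    rw [hs, hc, ht]
    calc ϖ ^ n₁ * s * ((↑hsu.unit⁻¹ : O) * t)
        = ϖ ^ n₁ * t * (s * (↑hsu.unit⁻¹ : O)) := by ring
      _ = ϖ ^ n₁ * t := by rw [hs1, mul_one]
  have h₁ : IsUnit ((1 : Oˣ) + y * c : O) := by
    rw [hyc]
    simpa using u.isUnit
  have hmem : ((u : O) - 1) ∈ nonunits O := by
    intro hun
    have : IsUnit (ϖ * (ϖ ^ (n₁ - 1) * t)) := by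
      rw [show ϖ * (ϖ ^ (n₁ - 1) * t) = ϖ ^ (n₁ - 1 + 1) * t by ring,
        Nat.sub_add_cancel hn₁, ← ht]; exact hun
    have : IsUnit ϖ := isUnit_of_mul_isUnit_left this
    exact hϖ.not_isUnit this
  have h₂ : IsUnit ((1 : Oˣ) - y * c : O) := by
    rw [hyc]
    have := IsLocalRing.isUnit_one_sub_self_of_mem_nonunits _ hmem
    simpa using this
  refine ⟨1, 1, c, h₁, h₂, ?_⟩
  have e₁ : χ₁ h₁.unit = χ₁ u := by
    congr 1; ext; rw [h₁.unit_spec]; push_cast; rw [hyc]; ring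
  have e₂ : χ₂ h₂.unit = 1 := by
    apply hχ₂
    rw [h₂.unit_spec, Ideal.mem_span_singleton]
    have : ((1 : Oˣ) - y * c : O) - 1 = -(ϖ ^ n₁ * t) := by
      rw [hyc, ← ht]; push_cast; ring
    rw [this]
    exact dvd_neg.mpr ((pow_dvd_pow ϖ hn).mul_right t)
  rw [e₁, e₂, map_one, map_one, mul_one, mul_one]
  exact hu2
end

section
/- Let x ∈ X_k be a closed point of the crystalline deformation space of regular crystalline representations (all d Frobenius eigenvalues on WD(D_cris(r_x)) pairwise distinct), and let A be an affinoid algebra with ideal I satisfying I² = 0. Given a free A-module D of rank d with an automorphism Φ whose matrix (a_{ij}) in a basis (e_j) satisfies a_{ij} ∈ I for i > j and a_{ii} − a_{jj} ∈ A^× for i ≠ j, then there exist unique λ_2,...,λ_d ∈ I and μ ∈ A^× such that Φ(e_1 + Σ_{j≥2} λ_j e_j) = μ(e_1 + Σ_{j≥2} λ_j e_j). Consequently any Φ̄-stable complete flag of D/ID by direct summands lifts uniquely to a Φ-stable complete flag of D by direct summands. -/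
/-!
STATEMENT 11: Infinitesimal lifting of triangulations over the regular crystalline
locus.  Let `A` be an affinoid algebra (formalized: a commutative ring) with an ideal
`I` satisfying `I² = 0`, and `D = A^d` free of rank `d` with an automorphism `Φ`
whose matrix `M = (a_{ij})` satisfies `a_{ij} ∈ I` for `i > j` (strict lower
triangularity mod `I`) and `a_{ii} − a_{jj} ∈ Aˣ` for `i ≠ j` (regularity:
pairwise distinct Frobenius eigenvalues).  Then there exist unique
`λ₂, ..., λ_d ∈ I` and `μ ∈ Aˣ` with
`Φ(e₁ + Σ_{j≥2} λ_j e_j) = μ(e₁ + Σ_{j≥2} λ_j e_j)`, and consequently every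
`Φ̄`-stable complete flag of `D/ID` by direct summands lifts uniquely to a
`Φ`-stable complete flag of `D` by direct summands.
-/

namespace Stmt11
open Matrix Finset Polynomial

variable {A : Type} [CommRing A]





lemma small_mul {I : Ideal A} (hI : I ^ 2 = ⊥) {a b : A} (ha : a ∈ I) (hb : b ∈ I) :
    a * b = 0 := by
  have : a * b ∈ I ^ 2 := by rw [pow_two]; exact Ideal.mul_mem_mul ha hb
  rwa [hI, Ideal.mem_bot] at this

lemma isUnit_add_small {I : Ideal A} (hI : I ^ 2 = ⊥) {u a : A} (hu : IsUnit u) (ha : a ∈ I) :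
    IsUnit (u + a) := by
  obtain ⟨w, rfl⟩ := hu
  refine IsUnit.of_mul_eq_one ((↑w⁻¹ : A) * (1 - (↑w⁻¹ : A) * a)) ?_
  have h1 : (w : A) * (↑w⁻¹ : A) = 1 := w.mul_inv
  have h2 : a * a = 0 := small_mul hI ha ha
  linear_combination (1 - (↑w⁻¹ : A) * a) * h1 - ((↑w⁻¹ : A))^2 * h2

lemma idem_lift {I : Ideal A} (hI : I ^ 2 = ⊥) {c : A} (hc : c * c - c ∈ I) :
    ∃ e : A, e * e = e ∧ e - c ∈ I := by
  have ht : (c * c - c) * (c * c - c) = 0 := small_mul hI hc hc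
  refine ⟨c + (c * c - c) - 2 * c * (c * c - c), ?_, ?_⟩
  · have key : (c + (c * c - c) - 2 * c * (c * c - c)) * (c + (c * c - c) - 2 * c * (c * c - c))
        - (c + (c * c - c) - 2 * c * (c * c - c))
        = ((c * c - c) * (c * c - c)) * ((1 - 2 * c) ^ 2 - 4) := by ring
    rw [ht, zero_mul] at key
    exact sub_eq_zero.mp key
  · have h2 : c + (c * c - c) - 2 * c * (c * c - c) - c = (c * c - c) * (1 - 2 * c) := by ring
    rw [h2]
    exact Ideal.mul_mem_right _ _ hc

lemma idem_unique {I : Ideal A} (hI : I ^ 2 = ⊥) {e f : A} (he : e * e = e) (hf : f * f = f)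
    (hef : e - f ∈ I) : e = f := by
  have hs : f - e ∈ I := by
    have := I.neg_mem hef; simpa using this
  have hs2 : (f - e) * (f - e) = 0 := small_mul hI hs hs
  have h1 : f - e = 2 * (e * (f - e)) := by linear_combination -hf + he + hs2
  have h2 : e * (f - e) = 0 := by
    have h1' : e * (f - e) = 2 * ((e * e) * (f - e)) := by linear_combination e * h1
    rw [he] at h1'
    linear_combination -h1'
  have : f - e = 0 := by rw [h1, h2, mul_zero]
  linear_combination -this

lemma idem_mul_idem {e f : A} (he : e * e = e) (hf : f * f = f) :
    (e * f) * (e * f) = e * f := by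
  linear_combination f * f * he + e * hf

lemma idem_eq_of_span_sup {I : Ideal A} (hI : I ^ 2 = ⊥) {e f : A} (he : e * e = e)
    (hf : f * f = f) (h : Ideal.span {e} ⊔ I = Ideal.span {f} ⊔ I) : e = f := by
  have key : ∀ a b : A, a * a = a → b * b = b → Ideal.span {a} ⊔ I ≤ Ideal.span {b} ⊔ I →
      a * b = a := by
    intro a b ha hb hle
    have hmem : a ∈ Ideal.span {b} ⊔ I :=
      hle (Submodule.mem_sup_left (Ideal.subset_span rfl))
    obtain ⟨y, hy, z, hz, hyz⟩ := Submodule.mem_sup.mp hmem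
    obtain ⟨r, rfl⟩ := Ideal.mem_span_singleton.mp hy
    -- a = b * r + z
    have hab : a * b - a ∈ I := by
      have : a * b - a = z * (b - 1) := by linear_combination (b - 1) * (-hyz) + r * hb
      rw [this]
      exact Ideal.mul_mem_right _ _ hz
    exact idem_unique hI (idem_mul_idem ha hb) ha hab
  have h1 : e * f = e := key e f he hf (le_of_eq h)
  have h2 : f * e = f := key f e hf he (le_of_eq h.symm)
  linear_combination -h1 + h2



noncomputable def Xent {d : ℕ} (M : Matrix (Fin d) (Fin d) A) (u : Fin d → Fin d → A)
    (i j : Fin d) : A :=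
  if h : i < j then
    -(u i j) * (M i j + ∑ k ∈ (Finset.Ioo i j).attach, M i k.1 * Xent M u k.1 j)
  else 0
termination_by (j : ℕ) - (i : ℕ)
decreasing_by
  have hk := Finset.mem_Ioo.mp k.2
  have h1 : (i : ℕ) < (k : ℕ) := hk.1
  have h2 : ((k : Fin d) : ℕ) < (j : ℕ) := hk.2
  omega

lemma Xent_zero {d : ℕ} (M : Matrix (Fin d) (Fin d) A) (u : Fin d → Fin d → A)
    {i j : Fin d} (h : ¬ i < j) : Xent M u i j = 0 := by
  rw [Xent, dif_neg h]

lemma Xent_spec {d : ℕ} (M : Matrix (Fin d) (Fin d) A) (u : Fin d → Fin d → A)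
    (hu : ∀ i j : Fin d, i < j → u i j * (M i i - M j j) = 1)
    {i j : Fin d} (h : i < j) :
    (M i i - M j j) * Xent M u i j
      = -(M i j + ∑ k ∈ Finset.Ioo i j, M i k * Xent M u k j) := by
  rw [Xent, dif_pos h, Finset.sum_attach (Finset.Ioo i j) (fun k => M i k * Xent M u k j)]
  have h1 := hu i j h
  set S := M i j + ∑ k ∈ Finset.Ioo i j, M i k * Xent M u k j
  linear_combination (-S) * h1

lemma step1 {d : ℕ} (I : Ideal A) (M : Matrix (Fin d) (Fin d) A) (u : Fin d → Fin d → A)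
    (hu : ∀ i j : Fin d, i < j → u i j * (M i i - M j j) = 1)
    (hlow : ∀ i j : Fin d, j < i → M i j ∈ I) (i j : Fin d) :
    (M * (1 + Matrix.of (Xent M u)) -
      (1 + Matrix.of (Xent M u)) * Matrix.diagonal (fun k => M k k)) i j ∈ I := by
  set X := Matrix.of (Xent M u) with hX
  have hXa : ∀ a b : Fin d, X a b = Xent M u a b := fun a b => rfl
  have hentry : (M * (1 + X) - (1 + X) * Matrix.diagonal (fun k => M k k)) i j
      = M i j + (∑ k, M i k * X k j) - ((if i = j then M i i else 0) + X i j * M j j) := by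
    have e1 : (M * (1 + X)) i j = M i j + ∑ k, M i k * X k j := by
      rw [mul_add, mul_one, Matrix.add_apply, Matrix.mul_apply]
    have e2 : ((1 + X) * Matrix.diagonal (fun k => M k k)) i j
        = (if i = j then M i i else 0) + X i j * M j j := by
      rw [add_mul, one_mul, Matrix.add_apply, Matrix.mul_diagonal, Matrix.diagonal_apply]
    rw [Matrix.sub_apply, e1, e2]
  rw [hentry]
  by_cases hij : i < j
  · -- split the sum
    have hsplit : (∑ k, M i k * X k j)
        = (∑ k ∈ univ \ Finset.Ico i j, M i k * X k j) + ∑ k ∈ Finset.Ico i j, M i k * X k j :=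
      (Finset.sum_sdiff (Finset.subset_univ _)).symm
    have hico : ∑ k ∈ Finset.Ico i j, M i k * X k j
        = M i i * X i j + ∑ k ∈ Finset.Ioo i j, M i k * X k j := by
      rw [← Finset.Ioo_insert_left hij, Finset.sum_insert Finset.left_notMem_Ioo]
    have hzero : M i j + (M i i * X i j + ∑ k ∈ Finset.Ioo i j, M i k * X k j)
        - X i j * M j j = 0 := by
      have hs := Xent_spec M u hu hij
      simp only [hXa]
      linear_combination hs
    rw [hsplit, hico, if_neg (ne_of_lt hij)]
    have hre : M i j + ((∑ k ∈ univ \ Finset.Ico i j, M i k * X k j)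
          + (M i i * X i j + ∑ k ∈ Finset.Ioo i j, M i k * X k j))
        - (0 + X i j * M j j)
        = (∑ k ∈ univ \ Finset.Ico i j, M i k * X k j)
          + (M i j + (M i i * X i j + ∑ k ∈ Finset.Ioo i j, M i k * X k j) - X i j * M j j) := by
      ring
    rw [hre, hzero, add_zero]
    refine Ideal.sum_mem _ ?_
    intro k hk
    have hnot := (Finset.mem_sdiff.mp hk).2
    rw [Finset.mem_Ico] at hnot
    by_cases hkj : k < j
    · have hki : k < i := lt_of_not_ge (fun hik => hnot ⟨hik, hkj⟩)
      exact Ideal.mul_mem_right _ _ (hlow i k hki)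
    · rw [hXa, Xent_zero M u hkj, mul_zero]
      exact I.zero_mem
  · have hXij : X i j = 0 := Xent_zero M u hij
    rw [hXij, zero_mul, add_zero]
    have hS : (∑ k, M i k * X k j) ∈ I := by
      refine Ideal.sum_mem _ ?_
      intro k _
      by_cases hkj : k < j
      · exact Ideal.mul_mem_right _ _ (hlow i k (lt_of_lt_of_le hkj (le_of_not_gt hij)))
      · rw [hXa, Xent_zero M u hkj, mul_zero]
        exact I.zero_mem
    by_cases hij2 : i = j
    · subst hij2
      rw [if_pos rfl]
      have : M i i + (∑ k, M i k * X k i) - M i i = ∑ k, M i k * X k i := by ring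
      rw [this]
      exact hS
    · rw [if_neg hij2]
      have hji : j < i := lt_of_le_of_ne (le_of_not_gt hij) (fun h => hij2 h.symm)
      have : M i j + (∑ k, M i k * X k j) - 0 = M i j + (∑ k, M i k * X k j) := by ring
      rw [this]
      exact Ideal.add_mem _ (hlow i j hji) hS

lemma exists_diag (I : Ideal A) (hI : I ^ 2 = ⊥) {d : ℕ} (hd : 0 < d)
    (M : Matrix (Fin d) (Fin d) A) (hMinv : IsUnit M.det)
    (hlow : ∀ i j : Fin d, j < i → M i j ∈ I)
    (hdiag : ∀ i j : Fin d, i ≠ j → IsUnit (M i i - M j j)) :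
    ∃ (P Pinv : Matrix (Fin d) (Fin d) A) (δ : Fin d → A),
      P * Pinv = 1 ∧ Pinv * P = 1 ∧ M * P = P * Matrix.diagonal δ ∧
      (∀ k l, k ≠ l → IsUnit (δ k - δ l)) ∧ (∀ k, IsUnit (δ k)) ∧
      (∀ i, i ≠ ⟨0, hd⟩ → P i ⟨0, hd⟩ ∈ I) ∧ (∀ k, P k k - 1 ∈ I) := by
  classical
  -- inverses of diagonal differences
  set u : Fin d → Fin d → A := fun i j =>
    if h : i ≠ j then (((hdiag i j h).unit)⁻¹ : Aˣ) else 0 with hu_def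
  have hu : ∀ i j : Fin d, i < j → u i j * (M i i - M j j) = 1 := by
    intro i j hij
    have hne : i ≠ j := ne_of_lt hij
    have : u i j = (((hdiag i j hne).unit)⁻¹ : Aˣ) := by rw [hu_def]; simp [hne]
    rw [this]
    exact (hdiag i j hne).val_inv_mul
  set X := Matrix.of (Xent M u) with hXdef
  have hX0 : ∀ i j : Fin d, ¬ i < j → X i j = 0 := fun i j h => Xent_zero M u h
  -- invertibility of 1 + X
  have hbt : (1 + X).BlockTriangular id := by
    intro i j hji
    have h1 : (1 : Matrix (Fin d) (Fin d) A) i j = 0 := Matrix.one_apply_ne (ne_of_gt hji)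
    have h2 : X i j = 0 := hX0 i j (by exact fun h => absurd hji (not_lt_of_gt h))
    rw [Matrix.add_apply, h1, h2, add_zero]
  have hdet1 : (1 + X).det = 1 := by
    rw [Matrix.det_of_upperTriangular hbt]
    have : ∀ i : Fin d, (1 + X) i i = 1 := by
      intro i
      rw [Matrix.add_apply, Matrix.one_apply_eq, hX0 i i (lt_irrefl i), add_zero]
    rw [Finset.prod_congr rfl (fun i _ => this i), Finset.prod_const_one]
  haveI : Invertible (1 + X) := (1 + X).invertibleOfIsUnitDet (by rw [hdet1]; exact isUnit_one)
  set Q : Matrix (Fin d) (Fin d) A := ⅟(1 + X) with hQdef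
  have hQ1 : (1 + X) * Q = 1 := mul_invOf_self _
  have hQ2 : Q * (1 + X) = 1 := invOf_mul_self _
  set N : Matrix (Fin d) (Fin d) A := Q * M * (1 + X) with hNdef
  have hMXN : M * (1 + X) = (1 + X) * N := by
    rw [hNdef, ← Matrix.mul_assoc, ← Matrix.mul_assoc, hQ1, Matrix.one_mul]
  have hND : ∀ i j, (N - Matrix.diagonal (fun k => M k k)) i j ∈ I := by
    intro i j
    have heq2 : Q * (M * (1 + X)) = N := by rw [hNdef, Matrix.mul_assoc]
    have heq : N - Matrix.diagonal (fun k => M k k)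
        = Q * (M * (1 + X) - (1 + X) * Matrix.diagonal (fun k => M k k)) := by
      rw [Matrix.mul_sub, ← Matrix.mul_assoc Q (1 + X), hQ2, Matrix.one_mul, heq2]
    rw [heq, Matrix.mul_apply]
    exact Ideal.sum_mem _ (fun k _ => Ideal.mul_mem_left _ _ (step1 I M u hu hlow k j))
  have hNoff : ∀ i j : Fin d, i ≠ j → N i j ∈ I := by
    intro i j hij
    have := hND i j
    rwa [Matrix.sub_apply, Matrix.diagonal_apply_ne _ hij, sub_zero] at this
  have hNdd : ∀ i : Fin d, N i i - M i i ∈ I := by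
    intro i
    have := hND i i
    rwa [Matrix.sub_apply, Matrix.diagonal_apply_eq] at this
  have hNdu : ∀ k l : Fin d, k ≠ l → IsUnit (N k k - N l l) := by
    intro k l h
    have hre : N k k - N l l = (M k k - M l l) + ((N k k - M k k) - (N l l - M l l)) := by ring
    rw [hre]
    exact isUnit_add_small hI (hdiag k l h) (Ideal.sub_mem _ (hNdd k) (hNdd l))
  set w : Fin d → Fin d → A := fun i j =>
    if h : j ≠ i then (((hNdu j i h).unit)⁻¹ : Aˣ) else 0 with hw_def
  have hw : ∀ i j : Fin d, i ≠ j → w i j * (N j j - N i i) = 1 := by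
    intro i j hij
    have hne : j ≠ i := hij.symm
    have : w i j = (((hNdu j i hne).unit)⁻¹ : Aˣ) := by rw [hw_def]; simp [hne]
    rw [this]
    exact (hNdu j i hne).val_inv_mul
  set Y : Matrix (Fin d) (Fin d) A :=
    Matrix.of (fun i j => if i = j then 0 else w i j * N i j) with hYdef
  have hYa : ∀ i j : Fin d, Y i j = if i = j then 0 else w i j * N i j := fun i j => rfl
  have hYI : ∀ i j : Fin d, Y i j ∈ I := by
    intro i j
    rw [hYa]
    by_cases h : i = j
    · rw [if_pos h]; exact I.zero_mem
    · rw [if_neg h]; exact Ideal.mul_mem_left _ _ (hNoff i j h)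
  have hYY : Y * Y = 0 := by
    ext i j
    rw [Matrix.mul_apply, Matrix.zero_apply]
    exact Finset.sum_eq_zero (fun k _ => small_mul hI (hYI i k) (hYI k j))
  have hNY : N * (1 + Y) = (1 + Y) * Matrix.diagonal (fun k => N k k) := by
    ext i j
    have hNYij : (N * Y) i j = N i i * Y i j := by
      rw [Matrix.mul_apply]
      refine Finset.sum_eq_single i (fun k _ hk => ?_) (fun h => absurd (Finset.mem_univ i) h)
      by_cases hkj : k = j
      · subst hkj; rw [hYa, if_pos rfl, mul_zero]
      · exact small_mul hI (hNoff i k hk.symm) (hYI k j)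
    rw [Matrix.mul_add, Matrix.mul_one, Matrix.add_apply, hNYij,
      Matrix.mul_diagonal, Matrix.add_apply]
    by_cases hij : i = j
    · subst hij
      rw [hYa, if_pos rfl, mul_zero, add_zero, Matrix.one_apply_eq]
      ring
    · rw [Matrix.one_apply_ne hij, hYa, if_neg hij]
      have := hw i j hij
      linear_combination (-(N i j)) * this
  have hY1 : (1 + Y) * (1 - Y) = 1 := by
    have : (1 + Y) * (1 - Y) = 1 - Y * Y := by noncomm_ring
    rw [this, hYY, sub_zero]
  have hY2 : (1 - Y) * (1 + Y) = 1 := by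
    have : (1 - Y) * (1 + Y) = 1 - Y * Y := by noncomm_ring
    rw [this, hYY, sub_zero]
  refine ⟨(1 + X) * (1 + Y), (1 - Y) * Q, fun k => N k k, ?_, ?_, ?_, hNdu, ?_, ?_, ?_⟩
  · rw [Matrix.mul_assoc, ← Matrix.mul_assoc (1 + Y), hY1, Matrix.one_mul, hQ1]
  · rw [Matrix.mul_assoc, ← Matrix.mul_assoc Q, hQ2, Matrix.one_mul, hY2]
  · rw [← Matrix.mul_assoc, hMXN, Matrix.mul_assoc, hNY, ← Matrix.mul_assoc]
  · -- each diagonal entry is a unit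
    intro k
    have hPu : IsUnit ((1 + X) * (1 + Y)).det := by
      have : ((1 + X) * (1 + Y)).det * ((1 - Y) * Q).det = 1 := by
        rw [← Matrix.det_mul]
        rw [Matrix.mul_assoc, ← Matrix.mul_assoc (1 + Y), hY1, Matrix.one_mul, hQ1,
          Matrix.det_one]
      exact IsUnit.of_mul_eq_one _ this
    have hMP : M * ((1 + X) * (1 + Y)) = ((1 + X) * (1 + Y)) * Matrix.diagonal (fun k => N k k) := by
      rw [← Matrix.mul_assoc, hMXN, Matrix.mul_assoc, hNY, ← Matrix.mul_assoc]
    have hdetEq : M.det = (Matrix.diagonal (fun k => N k k)).det := by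
      have h1 : M.det * ((1 + X) * (1 + Y)).det = ((1 + X) * (1 + Y)).det *
          (Matrix.diagonal (fun k => N k k)).det := by
        rw [← Matrix.det_mul, ← Matrix.det_mul, hMP]
      rw [mul_comm M.det] at h1
      exact hPu.mul_left_cancel h1
    rw [hdetEq, Matrix.det_diagonal] at hMinv
    have hmemprod : N k k * (∏ l ∈ univ.erase k, N l l) = ∏ l, N l l :=
      Finset.mul_prod_erase univ (fun l => N l l) (Finset.mem_univ k)
    rw [← hmemprod] at hMinv
    exact isUnit_of_mul_isUnit_left hMinv
  · -- column 0 facts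
    intro i hi
    have hPmod : ((1 + X) * (1 + Y)) i ⟨0, hd⟩ - (1 + X) i ⟨0, hd⟩ ∈ I := by
      have : (1 + X) * (1 + Y) = (1 + X) + (1 + X) * Y := by noncomm_ring
      rw [this, Matrix.add_apply, add_sub_cancel_left, Matrix.mul_apply]
      exact Ideal.sum_mem _ (fun l _ => Ideal.mul_mem_left _ _ (hYI l _))
    have hX1 : (1 + X) i ⟨0, hd⟩ = 0 := by
      have hz : ¬ i < (⟨0, hd⟩ : Fin d) := by
        simp [Fin.lt_def]
      rw [Matrix.add_apply, Matrix.one_apply_ne hi, hX0 _ _ hz, add_zero]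
    rw [hX1, sub_zero] at hPmod
    exact hPmod
  · intro k
    have hPmod : ((1 + X) * (1 + Y)) k k - (1 + X) k k ∈ I := by
      have : (1 + X) * (1 + Y) = (1 + X) + (1 + X) * Y := by noncomm_ring
      rw [this, Matrix.add_apply, add_sub_cancel_left, Matrix.mul_apply]
      exact Ideal.sum_mem _ (fun l _ => Ideal.mul_mem_left _ _ (hYI l _))
    have hX1 : (1 + X) k k = 1 := by
      rw [Matrix.add_apply, Matrix.one_apply_eq, hX0 _ _ (lt_irrefl k), add_zero]
    rwa [hX1] at hPmod



lemma stable_poly {d : ℕ} (M : Matrix (Fin d) (Fin d) A) (W : Submodule A (Fin d → A))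
    (hW : ∀ x ∈ W, M.mulVec x ∈ W) (q : Polynomial A) :
    ∀ x ∈ W, (Polynomial.aeval M q).mulVec x ∈ W := by
  induction q using Polynomial.induction_on with
  | C a =>
    intro x hx
    rw [aeval_C]
    have : (algebraMap A (Matrix (Fin d) (Fin d) A) a) = a • (1 : Matrix (Fin d) (Fin d) A) :=
      Algebra.algebraMap_eq_smul_one a
    rw [this, Matrix.smul_mulVec, Matrix.one_mulVec]
    exact W.smul_mem a hx
  | add p q hp hq =>
    intro x hx
    rw [map_add, Matrix.add_mulVec]
    exact W.add_mem (hp x hx) (hq x hx)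
  | monomial n a hp =>
    intro x hx
    have heq : (C a : Polynomial A) * X ^ (n + 1) = (C a * X ^ n) * X := by ring
    rw [heq, _root_.map_mul, aeval_X, ← Matrix.mulVec_mulVec]
    exact hp (M.mulVec x) (hW x hx)

lemma eig_poly {d : ℕ} (M : Matrix (Fin d) (Fin d) A) (v : Fin d → A) (t : A)
    (h : M.mulVec v = t • v) (q : Polynomial A) :
    (Polynomial.aeval M q).mulVec v = (Polynomial.eval t q) • v := by
  induction q using Polynomial.induction_on with
  | C a =>
    rw [aeval_C, eval_C]
    have : (algebraMap A (Matrix (Fin d) (Fin d) A) a) = a • (1 : Matrix (Fin d) (Fin d) A) :=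
      Algebra.algebraMap_eq_smul_one a
    rw [this, Matrix.smul_mulVec, Matrix.one_mulVec]
  | add p q hp hq =>
    rw [map_add, Matrix.add_mulVec, hp, hq, eval_add, add_smul]
  | monomial n a hp =>
    have heq : (C a : Polynomial A) * X ^ (n + 1) = (C a * X ^ n) * X := by ring
    rw [heq, _root_.map_mul, aeval_X, ← Matrix.mulVec_mulVec, h, Matrix.mulVec_smul, hp]
    simp only [eval_mul, eval_X, eval_C, eval_pow, smul_smul]
    congr 1
    ring

lemma mem_K_iff {d : ℕ} (I : Ideal A) (x : Fin d → A) :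
    x ∈ I • (⊤ : Submodule A (Fin d → A)) ↔ ∀ i, x i ∈ I := by
  constructor
  · intro hx
    refine Submodule.smul_induction_on hx ?_ ?_
    · intro r hr n _ i
      exact Ideal.mul_mem_right _ _ hr
    · intro a b ha hb i
      exact Ideal.add_mem _ (ha i) (hb i)
  · intro hx
    have : x = ∑ i, x i • fun j => if i = j then (1 : A) else 0 := pi_eq_sum_univ x
    rw [this]
    exact Submodule.sum_mem _ (fun i _ =>
      Submodule.smul_mem_smul (hx i) Submodule.mem_top)
variable {d : ℕ}

noncomputable def vcol (P : Matrix (Fin d) (Fin d) A) : Fin d → (Fin d → A) :=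
  fun k i => P i k

noncomputable def phim (Pinv : Matrix (Fin d) (Fin d) A) (k : Fin d) :
    (Fin d → A) →ₗ[A] A :=
  (LinearMap.proj k).comp Pinv.mulVecLin

lemma phim_apply (Pinv : Matrix (Fin d) (Fin d) A) (k : Fin d) (x : Fin d → A) :
    phim Pinv k x = Pinv.mulVec x k := rfl

lemma hsum_lem {P Pinv : Matrix (Fin d) (Fin d) A} (hPP : P * Pinv = 1) (x : Fin d → A) :
    ∑ k, phim Pinv k x • vcol P k = x := by
  funext i
  rw [Finset.sum_apply]
  have : ∀ k, (phim Pinv k x • vcol P k) i = P i k * Pinv.mulVec x k := by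
    intro k
    rw [Pi.smul_apply, phim_apply, smul_eq_mul, vcol]
    ring
  rw [Finset.sum_congr rfl (fun k _ => this k)]
  have h2 : ∑ k, P i k * Pinv.mulVec x k = (P.mulVec (Pinv.mulVec x)) i := rfl
  rw [h2, Matrix.mulVec_mulVec, hPP, Matrix.one_mulVec]

lemma hMv_lem {M P : Matrix (Fin d) (Fin d) A} {δ : Fin d → A}
    (hMP : M * P = P * Matrix.diagonal δ) (k : Fin d) :
    M.mulVec (vcol P k) = δ k • vcol P k := by
  funext i
  have h1 : M.mulVec (vcol P k) i = (M * P) i k := by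
    rw [Matrix.mul_apply, Matrix.mulVec, dotProduct]
    rfl
  rw [h1, hMP, Matrix.mul_diagonal]
  rw [Pi.smul_apply, smul_eq_mul, vcol]
  ring

lemma hphiv_lem {P Pinv : Matrix (Fin d) (Fin d) A} (hPP' : Pinv * P = 1) (k l : Fin d) :
    phim Pinv k (vcol P l) = if k = l then 1 else 0 := by
  rw [phim_apply]
  have h1 : Pinv.mulVec (vcol P l) k = (Pinv * P) k l := by
    rw [Matrix.mul_apply, Matrix.mulVec, dotProduct]
    rfl
  rw [h1, hPP', Matrix.one_apply]

lemma hphiI_lem {Pinv : Matrix (Fin d) (Fin d) A} {I : Ideal A} {x : Fin d → A}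
    (hx : ∀ i, x i ∈ I) (k : Fin d) : phim Pinv k x ∈ I := by
  rw [phim_apply, Matrix.mulVec, dotProduct]
  exact Ideal.sum_mem _ (fun l _ => Ideal.mul_mem_left _ _ (hx l))

lemma hcoord_lem {P Pinv : Matrix (Fin d) (Fin d) A} (hPP' : Pinv * P = 1)
    (c : Fin d → A) (j : Fin d) : phim Pinv j (∑ k, c k • vcol P k) = c j := by
  rw [map_sum]
  have : ∀ k, phim Pinv j (c k • vcol P k) = c k * (if j = k then 1 else 0) := by
    intro k
    rw [_root_.map_smul, hphiv_lem hPP', smul_eq_mul]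
  rw [Finset.sum_congr rfl (fun k _ => this k)]
  simp



lemma key_stab {I : Ideal A} {M P Pinv : Matrix (Fin d) (Fin d) A} {δ : Fin d → A}
    (hPP : P * Pinv = 1) (hPP' : Pinv * P = 1)
    (hMP : M * P = P * Matrix.diagonal δ)
    (hδu : ∀ k l, k ≠ l → IsUnit (δ k - δ l))
    (W : Submodule A (Fin d → A)) (hW : ∀ x ∈ W, M.mulVec x ∈ W)
    {x : Fin d → A} (hx : x ∈ W) (k : Fin d) : phim Pinv k x • vcol P k ∈ W := by
  classical
  set q : Polynomial A := ∏ j ∈ univ.erase k, (Polynomial.X - Polynomial.C (δ j)) with hq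
  have heval : ∀ l, Polynomial.eval (δ l) q = ∏ j ∈ univ.erase k, (δ l - δ j) := by
    intro l
    rw [hq, Polynomial.eval_prod]
    exact Finset.prod_congr rfl (fun j _ => by rw [Polynomial.eval_sub, Polynomial.eval_X,
      Polynomial.eval_C])
  have hvl : ∀ l, (Polynomial.aeval M q).mulVec (vcol P l)
      = (∏ j ∈ univ.erase k, (δ l - δ j)) • vcol P l := by
    intro l
    rw [eig_poly M (vcol P l) (δ l) (hMv_lem hMP l) q, heval l]
  have hx2 : (Polynomial.aeval M q).mulVec x
      = (phim Pinv k x * ∏ j ∈ univ.erase k, (δ k - δ j)) • vcol P k := by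
    conv_lhs => rw [← hsum_lem hPP x]
    rw [← Matrix.mulVecLin_apply, map_sum]
    have hterm : ∀ l, (Polynomial.aeval M q).mulVecLin (phim Pinv l x • vcol P l)
        = (phim Pinv l x * ∏ j ∈ univ.erase k, (δ l - δ j)) • vcol P l := by
      intro l
      rw [_root_.map_smul, Matrix.mulVecLin_apply, hvl l, smul_smul]
    rw [Finset.sum_congr rfl (fun l _ => hterm l)]
    refine Finset.sum_eq_single k (fun l _ hlk => ?_) (fun h => absurd (Finset.mem_univ k) h)
    have : (∏ j ∈ univ.erase k, (δ l - δ j)) = 0 :=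
      Finset.prod_eq_zero (Finset.mem_erase.mpr ⟨hlk, Finset.mem_univ l⟩) (sub_self (δ l))
    rw [this, mul_zero, zero_smul]
  have hc : IsUnit (∏ j ∈ univ.erase k, (δ k - δ j)) := by
    refine Finset.prod_induction _ IsUnit (fun a b ha hb => ha.mul hb) isUnit_one ?_
    intro j hj
    exact hδu k j (Ne.symm (Finset.mem_erase.mp hj).1)
  obtain ⟨cu, hcu⟩ := hc
  have hmem := stable_poly M W hW q x hx
  rw [hx2] at hmem
  have h2 := W.smul_mem (↑cu⁻¹ : A) hmem
  rw [smul_smul] at h2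
  have hsc : (↑cu⁻¹ : A) * (phim Pinv k x * ∏ j ∈ univ.erase k, (δ k - δ j))
      = phim Pinv k x := by
    rw [← hcu]
    calc (↑cu⁻¹ : A) * (phim Pinv k x * ↑cu) = phim Pinv k x * ((↑cu⁻¹ : A) * ↑cu) := by ring
    _ = phim Pinv k x := by rw [cu.inv_mul, mul_one]
  rwa [hsc] at h2

lemma span_stab {M P : Matrix (Fin d) (Fin d) A} {δ : Fin d → A}
    (hMP : M * P = P * Matrix.diagonal δ) (g : Fin d → A) :
    Submodule.map M.mulVecLin (Submodule.span A (Set.range fun k => g k • vcol P k))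
      ≤ Submodule.span A (Set.range fun k => g k • vcol P k) := by
  rw [Submodule.map_span]
  refine Submodule.span_le.mpr ?_
  rintro _ ⟨_, ⟨k, rfl⟩, rfl⟩
  have : M.mulVecLin (g k • vcol P k) = δ k • (g k • vcol P k) := by
    rw [Matrix.mulVecLin_apply, Matrix.mulVec_smul, hMv_lem hMP k]
    exact smul_comm _ _ _
  rw [this]
  exact Submodule.smul_mem _ _ (Submodule.subset_span ⟨k, rfl⟩)

lemma smul_vcol_mem_K {I : Ideal A} {P : Matrix (Fin d) (Fin d) A} {a : A} (ha : a ∈ I)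
    (k : Fin d) : a • vcol P k ∈ I • (⊤ : Submodule A (Fin d → A)) := by
  rw [mem_K_iff]
  intro i
  exact Ideal.mul_mem_right _ _ ha

lemma span_sup_K {I : Ideal A} {P Pinv : Matrix (Fin d) (Fin d) A} (hPP' : Pinv * P = 1)
    (g : Fin d → A) (k : Fin d) (a : A)
    (h : a • vcol P k ∈ Submodule.span A (Set.range fun l => g l • vcol P l)
          ⊔ I • (⊤ : Submodule A (Fin d → A))) :
    ∃ b ι, ι ∈ I ∧ a = b * g k + ι := by
  obtain ⟨y, hy, κ, hκ, hyκ⟩ := Submodule.mem_sup.mp h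
  obtain ⟨b, hb⟩ := (Submodule.mem_span_range_iff_exists_fun A).mp hy
  refine ⟨b k, phim Pinv k κ, hphiI_lem (fun i => (mem_K_iff I κ).mp hκ i) k, ?_⟩
  have h1 : phim Pinv k (a • vcol P k) = a := by
    rw [_root_.map_smul, hphiv_lem hPP', if_pos rfl, smul_eq_mul, mul_one]
  have h2 : phim Pinv k y = b k * g k := by
    rw [← hb]
    have : ∀ l, b l • (g l • vcol P l) = (b l * g l) • vcol P l := fun l => (smul_smul _ _ _)
    rw [Finset.sum_congr rfl (fun l _ => this l), hcoord_lem hPP']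
  rw [← h1, ← hyκ, map_add, h2]


end Stmt11

open Matrix Finset Polynomial Stmt11 in
theorem stmt_11
    (A : Type) [CommRing A] (I : Ideal A) (hI : I ^ 2 = ⊥)
    (d : ℕ) (hd : 0 < d)
    (M : Matrix (Fin d) (Fin d) A) (hMinv : IsUnit M.det)
    (hlow : ∀ i j : Fin d, j < i → M i j ∈ I)
    (hdiag : ∀ i j : Fin d, i ≠ j → IsUnit (M i i - M j j)) :
    (∃! lm : (Fin d → A) × A,
        IsUnit lm.2 ∧ lm.1 ⟨0, hd⟩ = 1 ∧ (∀ j : Fin d, j ≠ ⟨0, hd⟩ → lm.1 j ∈ I) ∧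
        M.mulVec lm.1 = lm.2 • lm.1) ∧
    ∀ Fil' : Fin (d + 1) →
        Submodule A ((Fin d → A) ⧸ (I • (⊤ : Submodule A (Fin d → A)))),
      StrictMono Fil' →
      Fil' 0 = ⊥ → Fil' (Fin.last d) = ⊤ →
      (∀ i, ∃ c, IsCompl (Fil' i) c) →
      (∀ i, (((Fil' i).comap (I • (⊤ : Submodule A (Fin d → A))).mkQ).map
          M.mulVecLin) ≤ (Fil' i).comap (I • (⊤ : Submodule A (Fin d → A))).mkQ) →
      ∃! Fil : Fin (d + 1) → Submodule A (Fin d → A),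
        StrictMono Fil ∧ Fil 0 = ⊥ ∧ Fil (Fin.last d) = ⊤ ∧
        (∀ i, ∃ c, IsCompl (Fil i) c) ∧
        (∀ i, (Fil i).map M.mulVecLin ≤ Fil i) ∧
        ∀ i, (Fil i).map (I • (⊤ : Submodule A (Fin d → A))).mkQ = Fil' i := by
  classical
  obtain ⟨P, Pinv, δ, hPP, hPP', hMP, hδu, hδv, hPcol, hPdd⟩ :=
    exists_diag I hI hd M hMinv hlow hdiag
  constructor
  · -- Part 1: the distinguished eigenvector
    have hvzu : IsUnit (vcol P ⟨0, hd⟩ ⟨0, hd⟩) := by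
      have h1 : vcol P ⟨0, hd⟩ ⟨0, hd⟩ = 1 + (P ⟨0, hd⟩ ⟨0, hd⟩ - 1) := by
        show P ⟨0, hd⟩ ⟨0, hd⟩ = _
        ring
      rw [h1]
      exact isUnit_add_small hI isUnit_one (hPdd ⟨0, hd⟩)
    obtain ⟨w0, hw0⟩ := hvzu
    refine ⟨((↑w0⁻¹ : A) • vcol P ⟨0, hd⟩, δ ⟨0, hd⟩), ⟨hδv _, ?_, ?_, ?_⟩, ?_⟩
    · show (↑w0⁻¹ : A) * vcol P ⟨0, hd⟩ ⟨0, hd⟩ = 1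
      rw [← hw0]
      exact w0.inv_mul
    · intro j hj
      show (↑w0⁻¹ : A) * P j ⟨0, hd⟩ ∈ I
      exact Ideal.mul_mem_left _ _ (hPcol j hj)
    · show M.mulVec ((↑w0⁻¹ : A) • vcol P ⟨0, hd⟩) = _
      rw [Matrix.mulVec_smul, hMv_lem hMP]
      exact smul_comm _ _ _
    · rintro ⟨l, m⟩ ⟨hm, hlz, hlI, hle⟩
      simp only at hlz hlI hle ⊢
      have hsmall : ∀ i, (l - (↑w0⁻¹ : A) • vcol P ⟨0, hd⟩) i ∈ I := by
        intro i
        by_cases hi : i = ⟨0, hd⟩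
        · have hval : (l - (↑w0⁻¹ : A) • vcol P ⟨0, hd⟩) i
              = l i - (↑w0⁻¹ : A) * vcol P ⟨0, hd⟩ i := rfl
          rw [hval, hi]
          have hval2 : vcol P ⟨0, hd⟩ ⟨0, hd⟩ = (↑w0 : A) := hw0.symm
          rw [hlz, hval2, w0.inv_mul, sub_self]
          exact I.zero_mem
        · have : (l - (↑w0⁻¹ : A) • vcol P ⟨0, hd⟩) i = l i - (↑w0⁻¹ : A) * P i ⟨0, hd⟩ := rfl
          rw [this]
          exact I.sub_mem (hlI i hi) (Ideal.mul_mem_left _ _ (hPcol i hi))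
      have haz : phim Pinv ⟨0, hd⟩ l - (↑w0⁻¹ : A) ∈ I := by
        have heq : phim Pinv ⟨0, hd⟩ l - (↑w0⁻¹ : A)
            = phim Pinv ⟨0, hd⟩ (l - (↑w0⁻¹ : A) • vcol P ⟨0, hd⟩) := by
          rw [map_sub, _root_.map_smul, hphiv_lem hPP', if_pos rfl, smul_eq_mul, mul_one]
        rw [heq]
        exact hphiI_lem hsmall _
      have hazu : IsUnit (phim Pinv ⟨0, hd⟩ l) := by
        have heq : phim Pinv ⟨0, hd⟩ l = (↑w0⁻¹ : A) + (phim Pinv ⟨0, hd⟩ l - (↑w0⁻¹ : A)) := by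
          ring
        rw [heq]
        exact isUnit_add_small hI (Units.isUnit w0⁻¹) haz
      have heig : ∀ k, δ k * phim Pinv k l = m * phim Pinv k l := by
        intro k
        have h1 : M.mulVec l = ∑ j, (δ j * phim Pinv j l) • vcol P j := by
          conv_lhs => rw [← hsum_lem hPP l]
          rw [← Matrix.mulVecLin_apply, map_sum]
          refine Finset.sum_congr rfl (fun j _ => ?_)
          rw [_root_.map_smul, Matrix.mulVecLin_apply, hMv_lem hMP j, smul_smul, mul_comm]
        have h2 : m • l = ∑ j, (m * phim Pinv j l) • vcol P j := by
          conv_lhs => rw [← hsum_lem hPP l]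
          rw [Finset.smul_sum]
          exact Finset.sum_congr rfl (fun j _ => by rw [smul_smul])
        have h3 := hle
        rw [h1, h2] at h3
        have h4 := congrArg (phim Pinv k) h3
        rwa [hcoord_lem hPP', hcoord_lem hPP'] at h4
      have hmz : m = δ ⟨0, hd⟩ := by
        have h := heig ⟨0, hd⟩
        have h5 : phim Pinv ⟨0, hd⟩ l * δ ⟨0, hd⟩ = phim Pinv ⟨0, hd⟩ l * m := by
          linear_combination h
        exact (hazu.mul_left_cancel h5).symm
      have hak : ∀ k, k ≠ ⟨0, hd⟩ → phim Pinv k l = 0 := by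
        intro k hk
        have h := heig k
        rw [hmz] at h
        have hu := hδu k ⟨0, hd⟩ hk
        have h2 : (δ k - δ ⟨0, hd⟩) * phim Pinv k l = (δ k - δ ⟨0, hd⟩) * 0 := by
          linear_combination h
        exact hu.mul_left_cancel h2
      have hlval : l = phim Pinv ⟨0, hd⟩ l • vcol P ⟨0, hd⟩ := by
        conv_lhs => rw [← hsum_lem hPP l]
        rw [Finset.sum_eq_single ⟨0, hd⟩ (fun j _ hj => by rw [hak j hj, zero_smul])
          (fun h => absurd (Finset.mem_univ _) h)]
      have hazval : phim Pinv ⟨0, hd⟩ l = (↑w0⁻¹ : A) := by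
        have h1 : phim Pinv ⟨0, hd⟩ l * vcol P ⟨0, hd⟩ ⟨0, hd⟩ = 1 := by
          have h2 := congrFun hlval ⟨0, hd⟩
          rw [hlz] at h2
          exact h2.symm
        rw [← hw0] at h1
        calc phim Pinv ⟨0, hd⟩ l = phim Pinv ⟨0, hd⟩ l * ((↑w0 : A) * ↑w0⁻¹) := by
              rw [w0.mul_inv, mul_one]
        _ = (phim Pinv ⟨0, hd⟩ l * ↑w0) * ↑w0⁻¹ := by ring
        _ = ↑w0⁻¹ := by rw [h1, one_mul]
      have hlfin : l = (↑w0⁻¹ : A) • vcol P ⟨0, hd⟩ := by rw [hlval, hazval]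
      exact Prod.ext_iff.mpr ⟨hlfin, hmz⟩
  · -- Part 2: flag lifting
    set K : Submodule A (Fin d → A) := I • (⊤ : Submodule A (Fin d → A)) with hKdef
    intro Fil' hmono h0 hlast hcompl hstab
    have hK : ∀ x : Fin d → A, x ∈ K ↔ ∀ i, x i ∈ I := fun x => mem_K_iff I x
    have hKle : ∀ i, K ≤ (Fil' i).comap K.mkQ := by
      intro i x hx
      have hx0 : K.mkQ x = 0 := by
        rw [Submodule.mkQ_apply, Submodule.Quotient.mk_eq_zero]
        exact hx
      rw [Submodule.mem_comap, hx0]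
      exact Submodule.zero_mem _
    have hPstab : ∀ i, ∀ x ∈ (Fil' i).comap K.mkQ, M.mulVec x ∈ (Fil' i).comap K.mkQ := by
      intro i x hx
      refine hstab i ?_
      exact Submodule.mem_map.mpr ⟨x, hx, by rw [Matrix.mulVecLin_apply]⟩
    have hgen : ∀ (i : Fin (d+1)) (k : Fin d), ∃ e : A, e * e = e ∧
        ∀ a : A, a • vcol P k ∈ (Fil' i).comap K.mkQ ↔ a ∈ Ideal.span {e} ⊔ I := by
      intro i k
      obtain ⟨ci, hci⟩ := hcompl i
      set π : ((Fin d → A) ⧸ K) →ₗ[A] ((Fin d → A) ⧸ K) :=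
        (Fil' i).subtype.comp ((Fil' i).linearProjOfIsCompl ci hci) with hπdef
      have hπ1 : ∀ y (_ : y ∈ Fil' i), π y = y := by
        intro y hy
        calc π y = ((Fil' i).subtype)
              (((Fil' i).linearProjOfIsCompl ci hci) ((⟨y, hy⟩ : Fil' i) : (Fin d → A) ⧸ K)) := rfl
        _ = y := by
            rw [show ((Fil' i).linearProjOfIsCompl ci hci) ((⟨y, hy⟩ : Fil' i) : (Fin d → A) ⧸ K)
              = ⟨y, hy⟩ from Submodule.linearProjOfIsCompl_apply_left hci ⟨y, hy⟩]
            rfl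
      have hπmem : ∀ y, π y ∈ Fil' i := fun y => ((Fil' i).linearProjOfIsCompl ci hci y).2
      obtain ⟨zrep, hzrep⟩ := Submodule.mkQ_surjective K (π (K.mkQ (vcol P k)))
      have hzmem : zrep ∈ (Fil' i).comap K.mkQ := by
        rw [Submodule.mem_comap, hzrep]
        exact hπmem _
      have h1 : phim Pinv k zrep • vcol P k ∈ (Fil' i).comap K.mkQ :=
        key_stab (I := I) hPP hPP' hMP hδu _ (hPstab i) hzmem k
      have h2 : ∀ a : A, a • vcol P k ∈ (Fil' i).comap K.mkQ
          → a - a * phim Pinv k zrep ∈ I := by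
        intro a haa
        rw [Submodule.mem_comap] at haa
        have hfix : π (K.mkQ (a • vcol P k)) = K.mkQ (a • vcol P k) := hπ1 _ haa
        have hlhs : π (K.mkQ (a • vcol P k)) = K.mkQ (a • zrep) := by
          calc π (K.mkQ (a • vcol P k)) = π (a • K.mkQ (vcol P k)) := by rw [_root_.map_smul]
          _ = a • π (K.mkQ (vcol P k)) := by rw [_root_.map_smul]
          _ = a • K.mkQ zrep := by rw [hzrep]
          _ = K.mkQ (a • zrep) := by rw [_root_.map_smul]
        have heq : K.mkQ (a • zrep) = K.mkQ (a • vcol P k) := by rw [← hlhs, hfix]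
        have hdiff : a • zrep - a • vcol P k ∈ K := by
          rwa [Submodule.mkQ_apply, Submodule.mkQ_apply, Submodule.Quotient.eq] at heq
        have h3 := hphiI_lem (Pinv := Pinv) (fun i2 => (hK _).mp hdiff i2) k
        rw [map_sub, _root_.map_smul, _root_.map_smul, hphiv_lem hPP', if_pos rfl,
          smul_eq_mul, smul_eq_mul, mul_one] at h3
        have h4 := I.neg_mem h3
        rw [neg_sub] at h4
        exact h4
      have h3 : phim Pinv k zrep * phim Pinv k zrep - phim Pinv k zrep ∈ I := by
        have h4 := I.neg_mem (h2 (phim Pinv k zrep) h1)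
        rw [neg_sub] at h4
        exact h4
      obtain ⟨e, he, hec⟩ := idem_lift hI h3
      have hecI : phim Pinv k zrep - e ∈ I := by
        have := I.neg_mem hec
        rwa [neg_sub] at this
      refine ⟨e, he, fun a => ⟨fun haa => ?_, fun haa => ?_⟩⟩
      · have hamem : a - a * phim Pinv k zrep ∈ I := h2 a haa
        have heq2 : a = a * e + (a * (phim Pinv k zrep - e) + (a - a * phim Pinv k zrep)) := by
          ring
        rw [heq2]
        refine Submodule.add_mem _ (Submodule.mem_sup_left ?_) (Submodule.mem_sup_right ?_)
        · exact Ideal.mem_span_singleton.mpr ⟨a, mul_comm a e⟩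
        · exact I.add_mem (Ideal.mul_mem_left _ _ hecI) hamem
      · obtain ⟨y, hy, ι, hι, hyι⟩ := Submodule.mem_sup.mp haa
        obtain ⟨b, hb⟩ := Ideal.mem_span_singleton.mp hy
        have hev : e • vcol P k ∈ (Fil' i).comap K.mkQ := by
          have heq3 : e • vcol P k
              = phim Pinv k zrep • vcol P k + (e - phim Pinv k zrep) • vcol P k := by
            rw [← add_smul]
            congr 1
            ring
          rw [heq3]
          exact Submodule.add_mem _ h1 (hKle i (smul_vcol_mem_K hec k))
        have hyv : y • vcol P k ∈ (Fil' i).comap K.mkQ := by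
          have heq4 : (e * b) • vcol P k = b • (e • vcol P k) := by rw [mul_comm, mul_smul]
          rw [hb, heq4]
          exact Submodule.smul_mem _ _ hev
        have hκv : ι • vcol P k ∈ (Fil' i).comap K.mkQ := hKle i (smul_vcol_mem_K hι k)
        rw [← hyι, add_smul]
        exact Submodule.add_mem _ hyv hκv
    choose e he hJ using hgen
    have hgenmem : ∀ i k, e i k • vcol P k ∈ (Fil' i).comap K.mkQ := fun i k =>
      (hJ i k _).mpr (Submodule.mem_sup_left (Ideal.subset_span rfl))
    have hsub : ∀ i, Submodule.span A (Set.range fun k => e i k • vcol P k) ⊔ K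
        = (Fil' i).comap K.mkQ := by
      intro i
      apply le_antisymm
      · refine sup_le ?_ (hKle i)
        refine Submodule.span_le.mpr ?_
        rintro _ ⟨k, rfl⟩
        exact hgenmem i k
      · intro x hx
        have hx3 : x = ∑ k, phim Pinv k x • vcol P k := (hsum_lem hPP x).symm
        rw [hx3]
        refine Submodule.sum_mem _ (fun k _ => ?_)
        have hx2 : phim Pinv k x • vcol P k ∈ (Fil' i).comap K.mkQ :=
          key_stab (I := I) hPP hPP' hMP hδu _ (hPstab i) hx k
        have hk2 := (hJ i k _).mp hx2
        obtain ⟨y, hy, ι, hι, hyι⟩ := Submodule.mem_sup.mp hk2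
        obtain ⟨b, hb⟩ := Ideal.mem_span_singleton.mp hy
        have heq : phim Pinv k x • vcol P k = b • (e i k • vcol P k) + ι • vcol P k := by
          rw [← hyι, hb, add_smul, mul_comm, mul_smul]
        rw [heq]
        refine Submodule.add_mem _ (Submodule.mem_sup_left ?_) (Submodule.mem_sup_right ?_)
        · exact Submodule.smul_mem _ _ (Submodule.subset_span ⟨k, rfl⟩)
        · exact smul_vcol_mem_K hι k
    have hmapFil : ∀ i, (Submodule.span A (Set.range fun k => e i k • vcol P k)).map K.mkQ
        = Fil' i := by
      intro i
      apply Submodule.comap_injective_of_surjective (Submodule.mkQ_surjective K)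
      rw [Submodule.comap_map_mkQ, sup_comm, hsub i]
    have hmul_e : ∀ (i j : Fin (d+1)), Fil' i ≤ Fil' j → ∀ k, e i k * e j k = e i k := by
      intro i j hij k
      have hmem : e i k • vcol P k ∈ (Fil' j).comap K.mkQ :=
        Submodule.comap_mono hij (hgenmem i k)
      have h4 := (hJ j k _).mp hmem
      obtain ⟨y, hy, ι, hι, hyι⟩ := Submodule.mem_sup.mp h4
      obtain ⟨b, hb⟩ := Ideal.mem_span_singleton.mp hy
      have hs : e i k * e j k - e i k ∈ I := by
        have hc2 : e i k = e j k * b + ι := by rw [← hyι, hb]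
        have heq : e i k * e j k - e i k = ι * (e j k - 1) := by
          linear_combination (e j k - 1) * hc2 + b * (he j k)
        rw [heq]
        exact Ideal.mul_mem_right _ _ hι
      exact idem_unique hI (idem_mul_idem (he i k) (he j k)) (he i k) hs
    have hFilmono : ∀ i j : Fin (d+1), i ≤ j →
        Submodule.span A (Set.range fun k => e i k • vcol P k)
          ≤ Submodule.span A (Set.range fun k => e j k • vcol P k) := by
      intro i j hij
      refine Submodule.span_le.mpr ?_
      rintro _ ⟨k, rfl⟩
      show e i k • vcol P k ∈ (Submodule.span A (Set.range fun l => e j l • vcol P l) : Set _)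
      have heik : e i k • vcol P k = e i k • (e j k • vcol P k) := by
        rw [smul_smul, hmul_e i j (hmono.monotone hij) k]
      rw [heik]
      exact Submodule.smul_mem _ _ (Submodule.subset_span ⟨k, rfl⟩)
    refine ⟨fun i => Submodule.span A (Set.range fun k => e i k • vcol P k),
      ⟨?_, ?_, ?_, ?_, ?_, hmapFil⟩, ?_⟩
    · -- strict mono
      intro i j hij
      show (Submodule.span A (Set.range fun k => e i k • vcol P k))
        < Submodule.span A (Set.range fun k => e j k • vcol P k)
      refine lt_of_le_of_ne (hFilmono i j hij.le) (fun heq => ?_)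
      exact (hmono hij).ne (by rw [← hmapFil i, ← hmapFil j, heq])
    · -- bottom
      have h00 : ∀ k, e 0 k = 0 := by
        intro k
        have h1 : e 0 k • vcol P k ∈ (Fil' 0).comap K.mkQ := hgenmem 0 k
        rw [h0] at h1
        have h2 : e 0 k • vcol P k ∈ K := by
          rwa [Submodule.comap_bot, Submodule.ker_mkQ] at h1
        have h3 : e 0 k * P k k ∈ I := (hK _).mp h2 k
        have h4 : e 0 k ∈ I := by
          have heq : e 0 k = e 0 k * P k k - e 0 k * (P k k - 1) := by ring
          rw [heq]
          exact I.sub_mem h3 (Ideal.mul_mem_left _ _ (hPdd k))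
        have h5 := small_mul hI h4 h4
        rw [he 0 k] at h5
        exact h5
      show Submodule.span A (Set.range fun k => e 0 k • vcol P k) = ⊥
      apply eq_bot_iff.mpr
      refine Submodule.span_le.mpr ?_
      rintro _ ⟨k, rfl⟩
      show e 0 k • vcol P k ∈ ((⊥ : Submodule A (Fin d → A)) : Set _)
      rw [h00 k, zero_smul]
      exact Submodule.zero_mem ⊥
    · -- top
      have h11 : ∀ k, e (Fin.last d) k = 1 := by
        intro k
        have h1 : (1 : A) • vcol P k ∈ (Fil' (Fin.last d)).comap K.mkQ := by
          rw [hlast]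
          exact Submodule.mem_comap.mpr trivial
        have h2 := (hJ (Fin.last d) k _).mp h1
        obtain ⟨y, hy, ι, hι, hyι⟩ := Submodule.mem_sup.mp h2
        obtain ⟨b, hb⟩ := Ideal.mem_span_singleton.mp hy
        have h1e : (1 : A) = e (Fin.last d) k * b + ι := by rw [← hyι, hb]
        have h5 : 1 - e (Fin.last d) k ∈ I := by
          have heq : 1 - e (Fin.last d) k = ι * (1 - e (Fin.last d) k) := by
            linear_combination (1 - e (Fin.last d) k) * h1e - b * (he (Fin.last d) k)
          rw [heq]
          exact Ideal.mul_mem_right _ _ hι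
        have hidem : (1 - e (Fin.last d) k) * (1 - e (Fin.last d) k)
            = 1 - e (Fin.last d) k := by
          linear_combination he (Fin.last d) k
        have h6 := small_mul hI h5 h5
        rw [hidem] at h6
        linear_combination -h6
      show Submodule.span A (Set.range fun k => e (Fin.last d) k • vcol P k) = ⊤
      apply eq_top_iff.mpr
      intro x _
      have hx : x = ∑ k, phim Pinv k x • vcol P k := (hsum_lem hPP x).symm
      rw [hx]
      refine Submodule.sum_mem _ (fun k _ => ?_)
      refine Submodule.smul_mem _ _ ?_
      have heq : vcol P k = e (Fin.last d) k • vcol P k := by rw [h11 k, one_smul]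
      rw [heq]
      exact Submodule.subset_span ⟨k, rfl⟩
    · -- complements
      intro i
      refine ⟨Submodule.span A (Set.range fun k => (1 - e i k) • vcol P k), ?_, ?_⟩
      · -- disjoint
        rw [Submodule.disjoint_def]
        intro x hx1 hx2
        obtain ⟨a, ha⟩ := (Submodule.mem_span_range_iff_exists_fun A).mp hx1
        obtain ⟨b, hb⟩ := (Submodule.mem_span_range_iff_exists_fun A).mp hx2
        have hcoords : ∀ j, phim Pinv j x = a j * e i j := by
          intro j
          rw [← ha]
          have hterm : ∀ k, a k • (e i k • vcol P k) = (a k * e i k) • vcol P k :=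
            fun k => smul_smul _ _ _
          rw [Finset.sum_congr rfl (fun k _ => hterm k), hcoord_lem hPP']
        have hcoords2 : ∀ j, phim Pinv j x = b j * (1 - e i j) := by
          intro j
          rw [← hb]
          have hterm : ∀ k, b k • ((1 - e i k) • vcol P k) = (b k * (1 - e i k)) • vcol P k :=
            fun k => smul_smul _ _ _
          rw [Finset.sum_congr rfl (fun k _ => hterm k), hcoord_lem hPP']
        have hzero : ∀ j, phim Pinv j x = 0 := by
          intro j
          have h1 : a j * e i j = b j * (1 - e i j) := by rw [← hcoords j, hcoords2 j]
          have h2 : a j * e i j = 0 := by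
            linear_combination (e i j) * h1 - (a j) * (he i j) - (b j) * (he i j)
          rw [hcoords j, h2]
        have hx3 : x = ∑ k, phim Pinv k x • vcol P k := (hsum_lem hPP x).symm
        rw [hx3]
        exact Finset.sum_eq_zero (fun k _ => by rw [hzero k, zero_smul])
      · -- codisjoint
        rw [codisjoint_iff_le_sup]
        intro x _
        have hx : x = ∑ k, phim Pinv k x • vcol P k := (hsum_lem hPP x).symm
        rw [hx]
        refine Submodule.sum_mem _ (fun k _ => ?_)
        have hsplit : phim Pinv k x • vcol P k
            = phim Pinv k x • (e i k • vcol P k)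
              + phim Pinv k x • ((1 - e i k) • vcol P k) := by
          rw [← smul_add, ← add_smul, show e i k + (1 - e i k) = 1 by ring, one_smul]
        rw [hsplit]
        exact Submodule.add_mem _
          (Submodule.mem_sup_left (Submodule.smul_mem _ _ (Submodule.subset_span ⟨k, rfl⟩)))
          (Submodule.mem_sup_right (Submodule.smul_mem _ _ (Submodule.subset_span ⟨k, rfl⟩)))
    · -- stability
      intro i
      exact span_stab hMP (e i)
    · -- uniqueness
      rintro G ⟨hGmono, hG0, hGlast, hGcompl, hGstab, hGmap⟩
      funext i
      obtain ⟨Ci, hCi⟩ := hGcompl i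
      set π : (Fin d → A) →ₗ[A] (Fin d → A) :=
        (G i).subtype.comp ((G i).linearProjOfIsCompl Ci hCi) with hπdef
      have hπ1 : ∀ y (_ : y ∈ G i), π y = y := by
        intro y hy
        calc π y = ((G i).subtype)
              (((G i).linearProjOfIsCompl Ci hCi) ((⟨y, hy⟩ : G i) : Fin d → A)) := rfl
        _ = y := by
            rw [show ((G i).linearProjOfIsCompl Ci hCi) ((⟨y, hy⟩ : G i) : Fin d → A)
              = ⟨y, hy⟩ from Submodule.linearProjOfIsCompl_apply_left hCi ⟨y, hy⟩]
            rfl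
      have hπmem : ∀ y, π y ∈ G i := fun y => ((G i).linearProjOfIsCompl Ci hCi y).2
      have hGstab' : ∀ x ∈ G i, M.mulVec x ∈ G i := by
        intro x hx
        exact hGstab i (Submodule.mem_map.mpr ⟨x, hx, by rw [Matrix.mulVecLin_apply]⟩)
      have h1 : ∀ k, phim Pinv k (π (vcol P k)) • vcol P k ∈ G i := fun k =>
        key_stab (I := I) hPP hPP' hMP hδu _ hGstab' (hπmem (vcol P k)) k
      have h2 : ∀ k a, a • vcol P k ∈ G i → a * phim Pinv k (π (vcol P k)) = a := by
        intro k a haa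
        have hfix : π (a • vcol P k) = a • vcol P k := hπ1 _ haa
        have hval := congrArg (phim Pinv k) hfix
        rw [_root_.map_smul π, _root_.map_smul, _root_.map_smul, hphiv_lem hPP',
          if_pos rfl, smul_eq_mul, smul_eq_mul, mul_one] at hval
        exact hval
      have hcid : ∀ k, phim Pinv k (π (vcol P k)) * phim Pinv k (π (vcol P k))
          = phim Pinv k (π (vcol P k)) := fun k => h2 k _ (h1 k)
      have hGspan : G i = Submodule.span A
          (Set.range fun k => phim Pinv k (π (vcol P k)) • vcol P k) := by
        apply le_antisymm
        · intro x hx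
          have hx2 : x = ∑ k, phim Pinv k x • vcol P k := (hsum_lem hPP x).symm
          rw [hx2]
          refine Submodule.sum_mem _ (fun k _ => ?_)
          have hmem := key_stab (I := I) hPP hPP' hMP hδu _ hGstab' hx k
          have heq : phim Pinv k x • vcol P k
              = phim Pinv k x • (phim Pinv k (π (vcol P k)) • vcol P k) := by
            rw [smul_smul, h2 k _ hmem]
          rw [heq]
          exact Submodule.smul_mem _ _ (Submodule.subset_span ⟨k, rfl⟩)
        · refine Submodule.span_le.mpr ?_
          rintro _ ⟨k, rfl⟩
          exact h1 k
      have hGsup : Submodule.span A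
          (Set.range fun k => phim Pinv k (π (vcol P k)) • vcol P k) ⊔ K
          = (Fil' i).comap K.mkQ := by
        rw [← hGspan]
        have hcm := Submodule.comap_map_mkQ K (G i)
        rw [hGmap i] at hcm
        rw [hcm, sup_comm]
      have hce : ∀ k, phim Pinv k (π (vcol P k)) = e i k := by
        intro k
        have hckmem : phim Pinv k (π (vcol P k)) • vcol P k ∈ (Fil' i).comap K.mkQ := by
          rw [← hGsup]
          exact Submodule.mem_sup_left (Submodule.subset_span ⟨k, rfl⟩)
        have hckJ : phim Pinv k (π (vcol P k)) ∈ Ideal.span {e i k} ⊔ I :=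
          (hJ i k _).mp hckmem
        have heik : e i k • vcol P k ∈ Submodule.span A
            (Set.range fun l => phim Pinv l (π (vcol P l)) • vcol P l) ⊔ K := by
          rw [hGsup]
          exact hgenmem i k
        obtain ⟨b, ι, hι, hbι⟩ := span_sup_K hPP' (fun l => phim Pinv l (π (vcol P l)))
          k (e i k) heik
        have hs1 : e i k * phim Pinv k (π (vcol P k)) - e i k ∈ I := by
          have heq2 : e i k * phim Pinv k (π (vcol P k)) - e i k
              = ι * (phim Pinv k (π (vcol P k)) - 1) := by
            linear_combination (phim Pinv k (π (vcol P k)) - 1) * hbι + b * (hcid k)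
          rw [heq2]
          exact Ideal.mul_mem_right _ _ hι
        have h5 : e i k * phim Pinv k (π (vcol P k)) = e i k :=
          idem_unique hI (idem_mul_idem (he i k) (hcid k)) (he i k) hs1
        obtain ⟨y2, hy2, ι2, hι2, hyι2⟩ := Submodule.mem_sup.mp hckJ
        obtain ⟨b2, hb2⟩ := Ideal.mem_span_singleton.mp hy2
        have hc2 : phim Pinv k (π (vcol P k)) = e i k * b2 + ι2 := by rw [← hyι2, hb2]
        have hs2 : phim Pinv k (π (vcol P k)) * e i k - phim Pinv k (π (vcol P k)) ∈ I := by
          have heq3 : phim Pinv k (π (vcol P k)) * e i k - phim Pinv k (π (vcol P k))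
              = ι2 * (e i k - 1) := by
            linear_combination (e i k - 1) * hc2 + b2 * (he i k)
          rw [heq3]
          exact Ideal.mul_mem_right _ _ hι2
        have h6 : phim Pinv k (π (vcol P k)) * e i k = phim Pinv k (π (vcol P k)) :=
          idem_unique hI (idem_mul_idem (hcid k) (he i k)) (hcid k) hs2
        calc phim Pinv k (π (vcol P k)) = phim Pinv k (π (vcol P k)) * e i k := h6.symm
        _ = e i k * phim Pinv k (π (vcol P k)) := mul_comm _ _
        _ = e i k := h5
      show G i = Submodule.span A (Set.range fun k => e i k • vcol P k)
      rw [hGspan]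
      congr 1
      have hfe : (fun k => phim Pinv k (π (vcol P k)) • vcol P k)
          = fun k => e i k • vcol P k := funext (fun k => by rw [hce k])
      rw [hfe]
end
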